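/- Let γ ∈ (0,1], λ > 0, κ ∈ [0,1). Then for every t ∈ ℝ, lim_{n→∞} exp(−λ·n·(((1 − cos(t·n^{−1/(2γ)}))(1+κ))/(κ² − 2κ·cos(t·n^{−1/(2γ)}) + 1))^γ) = exp(−(λ/2^γ)·((1+κ)^γ/(1−κ)^{2γ})·|t|^{2γ}). -/

import Mathlib

open Filter Real Topology

lemma sds_sin_div_tendsto : Filter.Tendsto (fun x : ℝ => Real.sin x / x) (nhdsWithin 0 {0}ᶜ) (nhds 1) := by
  have h := Real.hasDerivAt_sin 0
  rw [hasDerivAt_iff_tendsto_slope] at h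
  have heq : ∀ x : ℝ, slope Real.sin 0 x = Real.sin x / x := by
    intro x; simp [slope_fun_def, Real.sin_zero]; ring
  simpa [Real.cos_zero] using h.congr heq

lemma sds_one_sub_cos_div_sq :
    Filter.Tendsto (fun u : ℝ => (1 - Real.cos u) / u ^ 2) (nhdsWithin 0 {0}ᶜ) (nhds (1 / 2)) := by
  have h2 : Filter.Tendsto (fun u : ℝ => u / 2) (nhdsWithin (0:ℝ) {0}ᶜ)
      (nhdsWithin (0:ℝ) {0}ᶜ) := by
    apply tendsto_nhdsWithin_of_tendsto_nhds_of_eventually_within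
    · have : Filter.Tendsto (fun u : ℝ => u / 2) (nhds (0:ℝ)) (nhds (0/2)) :=
        (continuous_id.div_const 2).tendsto 0
      simpa using this.mono_left nhdsWithin_le_nhds
    · filter_upwards [self_mem_nhdsWithin] with x hx
      simp only [Set.mem_compl_iff, Set.mem_singleton_iff] at hx ⊢
      exact div_ne_zero hx two_ne_zero
  have hs := sds_sin_div_tendsto.comp h2
  have hsq := hs.mul hs
  have hmain := hsq.const_mul (1/2 : ℝ)
  refine (hmain.congr' ?_).mono_right (by norm_num)
  filter_upwards [self_mem_nhdsWithin] with u hu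
  simp only [Set.mem_compl_iff, Set.mem_singleton_iff] at hu
  have hsin : Real.sin (u/2) ^ 2 = 1/2 - Real.cos u / 2 := by
    have hc := Real.cos_sq (u/2)
    rw [show 2 * (u/2) = u by ring] at hc
    nlinarith [Real.sin_sq_add_cos_sq (u/2)]
  have : (1 - Real.cos u) = 2 * Real.sin (u/2)^2 := by linarith
  rw [this]
  simp only [Function.comp_apply]
  field_simp

theorem sds_domain_of_attraction (γ lam κ : ℝ)
    (hγ : γ ∈ Set.Ioc (0 : ℝ) 1) (hlam : 0 < lam) (hκ : κ ∈ Set.Ico (0 : ℝ) 1) (t : ℝ) :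
    Filter.Tendsto
      (fun n : ℕ =>
        Real.exp (-lam * n *
          (((1 - Real.cos (t * (n : ℝ) ^ (-(1 / (2 * γ))))) * (1 + κ)) /
            (κ ^ 2 - 2 * κ * Real.cos (t * (n : ℝ) ^ (-(1 / (2 * γ)))) + 1)) ^ γ))
      Filter.atTop
      (nhds (Real.exp (-(lam / 2 ^ γ) * ((1 + κ) ^ γ / (1 - κ) ^ (2 * γ)) * |t| ^ (2 * γ)))) := by
  obtain ⟨hγ0, hγ1⟩ := hγ
  obtain ⟨hκ0, hκ1⟩ := hκ
  have hκd : ∀ c : ℝ, c ≤ 1 → 0 < κ ^ 2 - 2 * κ * c + 1 := by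
    intro c hc
    nlinarith [mul_nonneg hκ0 (sub_nonneg.2 hc)]
  by_cases ht : t = 0
  · subst ht
    have h2γ : (2 * γ) ≠ 0 := by positivity
    simp only [zero_mul, Real.cos_zero, sub_self, zero_div, Real.zero_rpow hγ0.ne',
      mul_zero, Real.exp_zero, abs_zero, Real.zero_rpow h2γ]
    exact tendsto_const_nhds
  set a : ℝ := -(1 / (2 * γ)) with ha
  have hu : Filter.Tendsto (fun n : ℕ => t * (n : ℝ) ^ a) Filter.atTop
      (nhdsWithin (0:ℝ) {0}ᶜ) := by
    apply tendsto_nhdsWithin_of_tendsto_nhds_of_eventually_within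
    · have h0 : Filter.Tendsto (fun n : ℕ => ((n : ℝ)) ^ a) Filter.atTop (nhds 0) := by
        rw [ha]
        exact (tendsto_rpow_neg_atTop (by positivity)).comp tendsto_natCast_atTop_atTop
      simpa using h0.const_mul t
    · filter_upwards [Filter.eventually_ge_atTop 1] with n hn
      have hn0 : (0:ℝ) < (n:ℝ) := by exact_mod_cast hn
      have : (0:ℝ) < (n:ℝ) ^ a := Real.rpow_pos_of_pos hn0 a
      simp only [Set.mem_compl_iff, Set.mem_singleton_iff]
      exact mul_ne_zero ht this.ne'
  set F : ℝ → ℝ := fun u =>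
    t ^ 2 * ((1 - Real.cos u) * (1 + κ) / (κ ^ 2 - 2 * κ * Real.cos u + 1)) / u ^ 2 with hFdef
  have h1κ : (0:ℝ) < 1 - κ := by linarith
  have hF : Filter.Tendsto F (nhdsWithin (0:ℝ) {0}ᶜ)
      (nhds (t ^ 2 * (1 + κ) / (2 * (1 - κ) ^ 2))) := by
    have hd0 : κ ^ 2 - 2 * κ * Real.cos 0 + 1 = (1 - κ) ^ 2 := by
      rw [Real.cos_zero]; ring
    have hden : ContinuousAt (fun u : ℝ => (1 + κ) / (κ ^ 2 - 2 * κ * Real.cos u + 1)) 0 := by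
      apply ContinuousAt.div continuousAt_const (by fun_prop)
      rw [hd0]; positivity
    have h1 := (sds_one_sub_cos_div_sq.mul
      (hden.tendsto.mono_left nhdsWithin_le_nhds)).const_mul (t ^ 2)
    have h2 : ∀ u : ℝ, t ^ 2 * ((1 - Real.cos u) / u ^ 2 *
        ((1 + κ) / (κ ^ 2 - 2 * κ * Real.cos u + 1))) = F u := by
      intro u; simp only [hFdef]; ring
    have h3 := h1.congr h2
    convert h3 using 2
    rw [hd0]
    field_simp
  have hrpowcont : ContinuousAt (fun x : ℝ => x ^ γ) (t ^ 2 * (1 + κ) / (2 * (1 - κ) ^ 2)) :=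
    Real.continuousAt_rpow_const _ γ (Or.inr hγ0.le)
  have hcomp : Filter.Tendsto (fun n : ℕ => (F (t * (n : ℝ) ^ a)) ^ γ) Filter.atTop
      (nhds ((t ^ 2 * (1 + κ) / (2 * (1 - κ) ^ 2)) ^ γ)) :=
    hrpowcont.tendsto.comp (hF.comp hu)
  have key : Filter.Tendsto (fun n : ℕ => (n : ℝ) *
      (((1 - Real.cos (t * (n : ℝ) ^ a)) * (1 + κ)) /
        (κ ^ 2 - 2 * κ * Real.cos (t * (n : ℝ) ^ a) + 1)) ^ γ) Filter.atTop
      (nhds ((t ^ 2 * (1 + κ) / (2 * (1 - κ) ^ 2)) ^ γ)) := by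
    refine hcomp.congr' ?_
    filter_upwards [Filter.eventually_ge_atTop 1] with n hn
    have hn0 : (0:ℝ) < (n:ℝ) := by exact_mod_cast hn
    set u : ℝ := t * (n : ℝ) ^ a with hudef
    set X : ℝ := ((1 - Real.cos u) * (1 + κ)) /
      (κ ^ 2 - 2 * κ * Real.cos u + 1) with hXdef
    have hX : 0 ≤ X := by
      apply div_nonneg
      · have := Real.cos_le_one u
        nlinarith
      · exact (hκd _ (Real.cos_le_one u)).le
    have hu2 : u ^ 2 = t ^ 2 * (n : ℝ) ^ (2 * a) := by
      rw [hudef, mul_pow, ← Real.rpow_natCast ((n:ℝ) ^ a) 2, ← Real.rpow_mul hn0.le]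
      norm_num [mul_comm]
    have h2a : 2 * a = -(1 / γ) := by
      rw [ha]; field_simp
    have hFu : F u = (n : ℝ) ^ (1 / γ) * X := by
      simp only [hFdef, ← hXdef]
      rw [hu2, h2a, Real.rpow_neg hn0.le]
      have ht2 : t ^ 2 ≠ 0 := pow_ne_zero 2 ht
      have hnp : (0:ℝ) < (n:ℝ) ^ (1 / γ) := Real.rpow_pos_of_pos hn0 _
      field_simp
    rw [hFu, Real.mul_rpow (Real.rpow_nonneg hn0.le _) hX,
      ← Real.rpow_mul hn0.le, one_div, inv_mul_cancel₀ hγ0.ne', Real.rpow_one]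
  have hmul := key.const_mul (-lam)
  have hexp := (Real.continuous_exp.tendsto _).comp hmul
  have heq1 : ∀ n : ℕ, Real.exp (-lam * ((n:ℝ) *
      (((1 - Real.cos (t * (n : ℝ) ^ a)) * (1 + κ)) /
        (κ ^ 2 - 2 * κ * Real.cos (t * (n : ℝ) ^ a) + 1)) ^ γ)) =
      Real.exp (-lam * n *
      (((1 - Real.cos (t * (n : ℝ) ^ a)) * (1 + κ)) /
        (κ ^ 2 - 2 * κ * Real.cos (t * (n : ℝ) ^ a) + 1)) ^ γ) := by
    intro n; ring_nf
  have hexp' := hexp.congr heq1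
  convert hexp' using 2
  -- constant equality
  have hM : (t ^ 2 * (1 + κ) / (2 * (1 - κ) ^ 2)) ^ γ =
      |t| ^ (2 * γ) * (1 + κ) ^ γ / (2 ^ γ * (1 - κ) ^ (2 * γ)) := by
    have ht2 : (0:ℝ) ≤ t ^ 2 := sq_nonneg t
    have h1κ' : (0:ℝ) ≤ 1 + κ := by linarith
    have hd : (0:ℝ) ≤ 2 * (1 - κ) ^ 2 := by positivity
    rw [Real.div_rpow (mul_nonneg ht2 h1κ') hd, Real.mul_rpow ht2 h1κ',
      Real.mul_rpow (by norm_num : (0:ℝ) ≤ 2) (sq_nonneg (1 - κ))]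
    congr 1
    · congr 1
      rw [← sq_abs t, ← Real.rpow_natCast |t| 2, ← Real.rpow_mul (abs_nonneg t)]
      norm_num
    · congr 1
      rw [← Real.rpow_natCast (1 - κ) 2, ← Real.rpow_mul h1κ.le]
      norm_num
  rw [hM]
  have h2γpos : (0:ℝ) < 2 ^ γ := Real.rpow_pos_of_pos two_pos γ
  have h1κγ : (0:ℝ) < (1 - κ) ^ (2 * γ) := Real.rpow_pos_of_pos h1κ _
  field_simp
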